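/- For any approximating function ψ and any s with 0 < s ≤ 1, the s-dimensional Hausdorff measure of S×₂(ψ) ∩ [0,1]² is infinite. -/
import Mathlib


open MeasureTheory ENNReal

/-- Distance from a real number to the nearest integer. -/
noncomputable def distNearestInt (x : ℝ) : ℝ := |x - round x|

/-- The set of multiplicatively `ψ`-approximable points in the plane
(homogeneous case). -/
def multApprox2 (ψ : ℕ → ℝ) : Set (ℝ × ℝ) :=
  {x : ℝ × ℝ |
    {q : ℕ | 0 < q ∧
      distNearestInt (q * x.1) * distNearestInt (q * x.2) < ψ q}.Infinite}

theorem mult_small_s_infinite (ψ : ℕ → ℝ) (hψpos : ∀ q, 0 < ψ q) (hψmono : Antitone ψ)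
    (s : ℝ) (hs₁ : 0 < s) (hs₂ : s ≤ 1) :
    μH[s] (multApprox2 ψ ∩ Set.Icc (0, 0) (1, 1)) = ∞ := by
  -- the vertical segments over 1/(n+2)
  set L : ℕ → Set (ℝ × ℝ) := fun n => {((n : ℝ) + 2)⁻¹} ×ˢ Set.Icc (0 : ℝ) 1 with hL
  have hpos : ∀ n : ℕ, (0 : ℝ) < (n : ℝ) + 2 := by
    intro n; positivity
  have hsub : ∀ n, L n ⊆ multApprox2 ψ ∩ Set.Icc (0, 0) (1, 1) := by
    intro n p hp
    obtain ⟨hp1, hp2⟩ := hp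
    simp only [Set.mem_singleton_iff] at hp1
    constructor
    · -- membership in multApprox2
      apply Set.infinite_of_injective_forall_mem
        (f := fun k : ℕ => (n + 2) * (k + 1))
      · intro a b hab
        simpa using hab
      · intro k
        refine ⟨by positivity, ?_⟩
        have : ((((n + 2) * (k + 1) : ℕ) : ℝ)) * p.1 = ((k : ℝ) + 1) := by
          rw [hp1]
          push_cast
          field_simp
        rw [this]
        have h0 : distNearestInt ((k : ℝ) + 1) = 0 := by
          have : ((k : ℝ) + 1) = ((k + 1 : ℤ) : ℝ) := by push_cast; ring
          rw [this]
          simp [distNearestInt]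
        rw [h0, zero_mul]
        exact hψpos _
    · -- membership in the square
      constructor
      · constructor
        · simp only [hp1]; positivity
        · exact hp2.1
      · constructor
        · rw [hp1]
          rw [inv_le_one_iff₀]
          right; linarith [hpos n]
        · exact hp2.2
  have hmeas : ∀ n, MeasurableSet (L n) :=
    fun n => (measurableSet_singleton _).prod measurableSet_Icc
  have hdisj : Pairwise (Function.onFun Disjoint L) := by
    intro a b hab
    apply Set.disjoint_left.2
    intro p hpa hpb
    apply hab
    have h1 := hpa.1; have h2 := hpb.1
    simp only [Set.mem_singleton_iff] at h1 h2
    have : ((a : ℝ) + 2)⁻¹ = ((b : ℝ) + 2)⁻¹ := by rw [← h1, h2]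
    have h3 := inv_injective this
    have : (a : ℝ) = b := by linarith
    exact_mod_cast this
  -- measure of each segment
  have hseg : ∀ n, μH[s] (L n) = μH[s] (Set.Icc (0 : ℝ) 1) := by
    intro n
    have hiso : Isometry (fun y : ℝ => ((((n : ℝ) + 2)⁻¹ : ℝ), y)) := by
      intro y z
      simp [Prod.edist_eq]
    have : L n = (fun y : ℝ => ((((n : ℝ) + 2)⁻¹ : ℝ), y)) '' Set.Icc 0 1 := by
      ext p
      simp [hL, Set.mem_image, Prod.ext_iff, eq_comm, and_comm]
    rw [this, hiso.hausdorffMeasure_image (Or.inl hs₁.le)]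
  have hIcc1 : μH[(1 : ℝ)] (Set.Icc (0 : ℝ) 1) = 1 := by
    rw [MeasureTheory.hausdorffMeasure_real, Real.volume_Icc]
    norm_num
  have hIcc : μH[s] (Set.Icc (0 : ℝ) 1) ≠ 0 := by
    rcases eq_or_lt_of_le hs₂ with h | h
    · rw [h, hIcc1]; exact one_ne_zero
    · rcases MeasureTheory.Measure.hausdorffMeasure_zero_or_top h (Set.Icc (0 : ℝ) 1) with h0 | h0
      · rw [hIcc1] at h0; exact absurd h0 one_ne_zero
      · rw [h0]; exact top_ne_zero
  -- conclude
  have hle : μH[s] (⋃ n, L n) ≤ μH[s] (multApprox2 ψ ∩ Set.Icc (0, 0) (1, 1)) :=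
    measure_mono (Set.iUnion_subset hsub)
  rw [measure_iUnion hdisj hmeas] at hle
  have htsum : (∑' n : ℕ, μH[s] (L n)) = ∞ := by
    simp only [hseg]
    rw [ENNReal.tsum_const_eq_top_of_ne_zero hIcc]
  rw [htsum, top_le_iff] at hle
  exact hle
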